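/- Let S be an admissible pinnacle set of B_{2k+1} that is not admissible in D_{2k+1}. Then in every signed permutation of rank 2k+1 whose pinnacle set equals S, all non-pinnacle values are negative. -/

import Mathlib

/-- The pinnacle set of a word `w : Fin n → ℤ`: values `w i` (for `0 < i < n-1`)
strictly larger than both neighbors. -/
def PinSet (n : ℕ) (w : Fin n → ℤ) : Set ℤ :=
  {x | ∃ (i : ℕ) (h0 : 0 < i) (h2 : i + 1 < n),
    w ⟨i, by omega⟩ = x ∧ w ⟨i - 1, by omega⟩ < w ⟨i, by omega⟩ ∧
      w ⟨i + 1, h2⟩ < w ⟨i, by omega⟩}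

/-- `w : Fin n → ℤ` is the one-line notation of a signed permutation of rank `n`:
the absolute values of its entries are distinct elements of `{1,...,n}`
(hence a bijection onto `{1,...,n}`). -/
def IsSignedPerm (n : ℕ) (w : Fin n → ℤ) : Prop :=
  (∀ i, 1 ≤ |w i| ∧ |w i| ≤ (n : ℤ)) ∧ Function.Injective fun i => |w i|

/-- `S` is an admissible pinnacle set of the hyperoctahedral group `B_n`. -/
def APSB (n : ℕ) (S : Finset ℤ) : Prop :=
  ∃ w : Fin n → ℤ, IsSignedPerm n w ∧ PinSet n w = ↑S

/-- `S` is an admissible pinnacle set of the type `D` group `D_n`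
(signed permutations with an even number of negative one-line entries). -/
def APSD (n : ℕ) (S : Finset ℤ) : Prop :=
  ∃ w : Fin n → ℤ, IsSignedPerm n w ∧
    Even (Finset.univ.filter fun i => w i < 0).card ∧ PinSet n w = ↑S

/-- `S` is an admissible pinnacle set of the symmetric group `S_n`
(an unsigned permutation is a signed permutation with all entries positive). -/
def APSA (n : ℕ) (S : Finset ℤ) : Prop :=
  ∃ w : Fin n → ℤ, IsSignedPerm n w ∧ (∀ i, 0 < w i) ∧ PinSet n w = ↑S

/-- `T` is an admissible pinnacle set of the totally ordered finite set `X ⊆ ℤ`: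
it is the pinnacle set of some arrangement of the elements of `X`. -/
def APSOn (X : Finset ℤ) (T : Finset ℤ) : Prop :=
  ∃ w : Fin X.card → ℤ, Function.Injective w ∧ (∀ i, w i ∈ X) ∧
    PinSet X.card w = ↑T

namespace Stmt12Aux

/-- totalization of `w` to `ℕ → ℤ` -/
def W {n : ℕ} (w : Fin n → ℤ) : ℕ → ℤ := fun q => if h : q < n then w ⟨q, h⟩ else 0

lemma W_eq {n : ℕ} (w : Fin n → ℤ) (q : ℕ) (h : q < n) : W w q = w ⟨q, h⟩ := dif_pos h

/-- `q` is a pinnacle position -/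
def PinN (n : ℕ) (w : Fin n → ℤ) (q : ℕ) : Prop :=
  0 < q ∧ q + 1 < n ∧ W w (q - 1) < W w q ∧ W w (q + 1) < W w q

instance (n : ℕ) (w : Fin n → ℤ) : DecidablePred (PinN n w) := fun q => by
  unfold PinN; infer_instance

lemma mem_pinset_iff {n : ℕ} (w : Fin n → ℤ) (x : ℤ) :
    x ∈ PinSet n w ↔ ∃ q, PinN n w q ∧ W w q = x := by
  constructor
  · rintro ⟨i, h0, h2, hx, hl, hr⟩
    refine ⟨i, ⟨h0, h2, ?_, ?_⟩, ?_⟩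
    · rw [W_eq w (i-1) (by omega), W_eq w i (by omega)]; exact hl
    · rw [W_eq w (i+1) h2, W_eq w i (by omega)]; exact hr
    · rw [W_eq w i (by omega)]; exact hx
  · rintro ⟨q, ⟨h0, h2, hl, hr⟩, hx⟩
    refine ⟨q, h0, h2, ?_, ?_, ?_⟩
    · rw [W_eq w q (by omega)] at hx; exact hx
    · rw [W_eq w (q-1) (by omega), W_eq w q (by omega)] at hl; exact hl
    · rw [W_eq w (q+1) h2, W_eq w q (by omega)] at hr; exact hr

lemma W_injOn {n : ℕ} {w : Fin n → ℤ} (hw : Function.Injective w) :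
    ∀ q1 < n, ∀ q2 < n, W w q1 = W w q2 → q1 = q2 := by
  intro q1 h1 q2 h2 h
  rw [W_eq w q1 h1, W_eq w q2 h2] at h
  exact congrArg Fin.val (hw h)

lemma finFilterCard (m k : ℕ) (hk : k ≤ m) :
    ((Finset.univ : Finset (Fin m)).filter (fun i : Fin m => (i : ℕ) < k)).card = k := by
  have h1 : ((Finset.univ : Finset (Fin m)).filter (fun i : Fin m => (i : ℕ) < k)).card
      = (Finset.range k).card := by
    refine Finset.card_nbij (i := fun i : Fin m => (i : ℕ)) ?_ ?_ ?_
    · intro a ha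
      simp only [Finset.mem_coe, Finset.mem_filter] at ha
      simp only [Finset.mem_coe, Finset.mem_range]
      exact ha.2
    · intro a _ b _ h; exact Fin.val_injective h
    · intro b hb
      simp only [Finset.coe_range, Set.mem_Iio] at hb
      refine ⟨⟨b, by omega⟩, ?_, rfl⟩
      simp only [Finset.coe_filter, Set.mem_setOf_eq, Finset.mem_univ, true_and]
      exact hb
  rw [h1, Finset.card_range]

lemma rank_lt {U : Finset ℤ} {m : ℕ} (h : U.card = m) {k : ℕ} (hk : k < m) {c : ℤ}
    (hc : k + 1 ≤ (U.filter (· < c)).card) : U.orderEmbOfFin h ⟨k, hk⟩ < c := by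
  by_contra hcon
  push_neg at hcon
  have hsub : U.filter (· < c) ⊆
      ((Finset.univ : Finset (Fin m)).filter (fun i : Fin m => (i : ℕ) < k)).image (U.orderEmbOfFin h) := by
    intro x hx
    rcases Finset.mem_filter.1 hx with ⟨hxU, hxc⟩
    have hxr : x ∈ Set.range (U.orderEmbOfFin h) := by
      rw [Finset.range_orderEmbOfFin]; exact hxU
    obtain ⟨i, hi⟩ := hxr
    refine Finset.mem_image.2 ⟨i, Finset.mem_filter.2 ⟨Finset.mem_univ _, ?_⟩, hi⟩
    have hlt : U.orderEmbOfFin h i < U.orderEmbOfFin h ⟨k, hk⟩ :=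
      lt_of_lt_of_le (hi ▸ hxc) hcon
    exact Fin.lt_def.mp ((U.orderEmbOfFin h).lt_iff_lt.1 hlt)
  have h1 := Finset.card_le_card hsub
  have h2 := Finset.card_image_le (s := (Finset.univ : Finset (Fin m)).filter
    (fun i : Fin m => (i : ℕ) < k)) (f := (U.orderEmbOfFin h : Fin m → ℤ))
  rw [finFilterCard m k hk.le] at h2
  omega

lemma card_filter_lt_orderEmb {S : Finset ℤ} {d : ℕ} (h : S.card = d) {j : ℕ} (hj : j < d) :
    (S.filter (· < S.orderEmbOfFin h ⟨j, hj⟩)).card = j := by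
  have hfc := finFilterCard d j hj.le
  have h1 : ((Finset.univ : Finset (Fin d)).filter (fun i : Fin d => (i : ℕ) < j)).card
      = (S.filter (· < S.orderEmbOfFin h ⟨j, hj⟩)).card := by
    refine Finset.card_nbij (i := fun i : Fin d => S.orderEmbOfFin h i) ?_ ?_ ?_
    · intro a ha
      simp only [Finset.mem_coe, Finset.mem_filter] at ha ⊢
      refine ⟨Finset.orderEmbOfFin_mem S h a, ?_⟩
      exact (S.orderEmbOfFin h).lt_iff_lt.2 (Fin.lt_def.mpr ha.2)
    · intro a _ b _ hab; exact (S.orderEmbOfFin h).injective hab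
    · intro x hx
      simp only [Finset.coe_filter, Set.mem_setOf_eq] at hx
      have hxr : x ∈ Set.range (S.orderEmbOfFin h) := by
        rw [Finset.range_orderEmbOfFin]; exact hx.1
      obtain ⟨i, hi⟩ := hxr
      refine ⟨i, ?_, hi⟩
      simp only [Finset.coe_filter, Set.mem_setOf_eq, Finset.mem_univ, true_and]
      have h2 : S.orderEmbOfFin h i < S.orderEmbOfFin h ⟨j, hj⟩ := hi ▸ hx.2
      exact Fin.lt_def.mp ((S.orderEmbOfFin h).lt_iff_lt.1 h2)
  rw [← h1]
  exact hfc


lemma counting {n : ℕ} {w : Fin n → ℤ} (hw : Function.Injective w) {S : Finset ℤ}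
    (hps : ∀ x, x ∈ PinSet n w ↔ x ∈ S) {s : ℤ} (hs : s ∈ S) :
    (S.filter (· < s)).card + 2 ≤
      (((Finset.univ.image w) \ S).filter (· < s)).card := by
  classical
  set NP := (Finset.univ.image w) \ S with hNP
  set Ppos := (Finset.range n).filter (fun q => PinN n w q ∧ W w q ≤ s) with hPpos
  -- the pinnacle position of s
  obtain ⟨qs, hqs, hWqs⟩ := (mem_pinset_iff w s).1 ((hps s).2 hs)
  have hqs_mem : qs ∈ Ppos := by
    refine Finset.mem_filter.2 ⟨Finset.mem_range.2 (by have := hqs.2.1; omega), hqs, le_of_eq hWqs⟩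
  have hPposNe : Ppos.Nonempty := ⟨qs, hqs_mem⟩
  -- every element of S that is a W-value at a pinnacle position
  have hval_pin : ∀ q, PinN n w q → W w q ∈ S := fun q hq =>
    (hps _).1 ((mem_pinset_iff w _).2 ⟨q, hq, rfl⟩)
  have hPposcard : Ppos.card = (S.filter (· ≤ s)).card := by
    refine Finset.card_nbij (i := fun q => W w q) ?_ ?_ ?_
    · intro q hq
      rcases Finset.mem_filter.1 hq with ⟨_, hpin, hle⟩
      exact Finset.mem_filter.2 ⟨hval_pin q hpin, hle⟩
    · intro q1 h1 q2 h2 hW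
      have h1' := Finset.mem_range.1 (Finset.mem_filter.1 (Finset.mem_coe.1 h1)).1
      have h2' := Finset.mem_range.1 (Finset.mem_filter.1 (Finset.mem_coe.1 h2)).1
      exact W_injOn hw q1 h1' q2 h2' hW
    · intro x hx
      have hx' := Finset.mem_filter.1 (Finset.mem_coe.1 hx)
      obtain ⟨q, hq, hWq⟩ := (mem_pinset_iff w x).1 ((hps x).2 hx'.1)
      refine ⟨q, Finset.mem_coe.2 (Finset.mem_filter.2
        ⟨Finset.mem_range.2 (by have := hq.2.1; omega), hq, ?_⟩), hWq⟩
      rw [hWq]; exact hx'.2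
  have hfil : (S.filter (· ≤ s)).card = (S.filter (· < s)).card + 1 := by
    have : S.filter (· ≤ s) = insert s (S.filter (· < s)) := by
      ext x
      simp only [Finset.mem_filter, Finset.mem_insert]
      constructor
      · rintro ⟨hxS, hxs⟩
        rcases lt_or_eq_of_le hxs with h | h
        · exact Or.inr ⟨hxS, h⟩
        · exact Or.inl h
      · rintro (rfl | ⟨hxS, hlt⟩)
        · exact ⟨hs, le_refl _⟩
        · exact ⟨hxS, le_of_lt hlt⟩
    rw [this, Finset.card_insert_of_notMem (by simp)]
  set q0 := Ppos.min' hPposNe with hq0def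
  have hq0_mem : q0 ∈ Ppos := Ppos.min'_mem hPposNe
  have hq0_pin : PinN n w q0 := (Finset.mem_filter.1 hq0_mem).2.1
  have hq0_le : W w q0 ≤ s := (Finset.mem_filter.1 hq0_mem).2.2
  set N := insert (q0 - 1) (Ppos.image (· + 1)) with hN
  have hNcard : N.card = Ppos.card + 1 := by
    rw [hN, Finset.card_insert_of_notMem, Finset.card_image_of_injective _ (add_left_injective 1)]
    intro hmem
    obtain ⟨q, hq, hq1⟩ := Finset.mem_image.1 hmem
    have hqmin := Ppos.min'_le q hq
    have hqpin : PinN n w q := (Finset.mem_filter.1 hq).2.1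
    have : 0 < q0 := hq0_pin.1
    omega
  -- properties of pinnacle positions
  have hpin_q : ∀ q, q ∈ Ppos → q + 1 < n ∧ W w (q+1) < W w q ∧ W w q ≤ s := by
    intro q hq
    rcases Finset.mem_filter.1 hq with ⟨_, hpin, hle⟩
    exact ⟨hpin.2.1, hpin.2.2.2, hle⟩
  have hNlt : ∀ r ∈ N, r < n := by
    intro r hr
    rcases Finset.mem_insert.1 hr with rfl | hr
    · have := hq0_pin.2.1; omega
    · obtain ⟨q, hq, rfl⟩ := Finset.mem_image.1 hr
      exact (hpin_q q hq).1
  have hNmaps : ∀ r ∈ N, W w r ∈ NP.filter (· < s) := by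
    intro r hr
    have hrn : r < n := hNlt r hr
    have hrimg : W w r ∈ Finset.univ.image w := by
      rw [W_eq w r hrn]
      exact Finset.mem_image.2 ⟨⟨r, hrn⟩, Finset.mem_univ _, rfl⟩
    have hnotpin : ¬ PinN n w r → W w r ∉ S := by
      intro hnp hS
      obtain ⟨q', hq', hWq'⟩ := (mem_pinset_iff w _).1 ((hps _).2 hS)
      have : q' = r := W_injOn hw q' (by have := hq'.2.1; omega) r hrn hWq'
      exact hnp (this ▸ hq')
    rcases Finset.mem_insert.1 hr with rfl | hr'
    · -- r = q0 - 1
      have h0 : 0 < q0 := hq0_pin.1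
      have hlt : W w (q0 - 1) < W w q0 := hq0_pin.2.2.1
      refine Finset.mem_filter.2 ⟨Finset.mem_sdiff.2 ⟨hrimg, ?_⟩, lt_of_lt_of_le hlt hq0_le⟩
      apply hnotpin
      intro hpin'
      have h1 : q0 - 1 + 1 = q0 := by omega
      have := hpin'.2.2.2
      rw [h1] at this
      linarith
    · obtain ⟨q, hq, rfl⟩ := Finset.mem_image.1 hr'
      obtain ⟨hq1n, hlt, hle⟩ := hpin_q q hq
      refine Finset.mem_filter.2 ⟨Finset.mem_sdiff.2 ⟨hrimg, ?_⟩, lt_of_lt_of_le hlt hle⟩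
      apply hnotpin
      intro hpin'
      have := hpin'.2.2.1
      have h1 : q + 1 - 1 = q := by omega
      rw [h1] at this
      linarith
  have hfinal : N.card ≤ (NP.filter (· < s)).card := by
    apply Finset.card_le_card_of_injOn (W w) hNmaps
    intro r1 h1 r2 h2 hW
    exact W_injOn hw r1 (hNlt r1 h1) r2 (hNlt r2 h2) hW
  omega

end Stmt12Aux

namespace Stmt12Aux

lemma main {n : ℕ} (w : Fin n → ℤ) (S : Finset ℤ) (hsp : IsSignedPerm n w)
    (hps : PinSet n w = ↑S) (i0 : Fin n) (hp0 : 0 < w i0) (hpS : w i0 ∉ S) :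
    APSD n S := by
  classical
  obtain ⟨hbnd, habs⟩ := hsp
  have hwinj : Function.Injective w := fun a b hab => habs (by simp only [hab])
  have hmem : ∀ x, x ∈ PinSet n w ↔ x ∈ S := fun x => by rw [hps]; exact Finset.mem_coe
  set p := w i0 with hpdef
  have hpabs : |p| = p := abs_of_pos hp0
  have hSsub : ∀ s ∈ S, ∃ a : Fin n, w a = s := by
    intro s hs
    obtain ⟨q, hq, hWq⟩ := (mem_pinset_iff w s).1 ((hmem s).2 hs)
    exact ⟨⟨q, by have := hq.2.1; omega⟩, by rw [← W_eq w q]; exact hWq⟩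
  obtain ⟨d, hScard⟩ : ∃ d, S.card = d := ⟨S.card, rfl⟩
  set absS := S.image (fun x => |x|) with habsSdef
  set A := (Finset.Icc (1:ℤ) (n:ℤ)) \ absS with hAdef
  set NP := (Finset.univ.image w) \ S with hNPdef
  have himgcard : (Finset.univ.image w).card = n := by
    rw [Finset.card_image_of_injective _ hwinj, Finset.card_univ, Fintype.card_fin]
  have hSimg : S ⊆ Finset.univ.image w := by
    intro s hs
    obtain ⟨a, ha⟩ := hSsub s hs
    exact Finset.mem_image.2 ⟨a, Finset.mem_univ a, ha⟩
  have hdn : d ≤ n := by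
    rw [← hScard, ← himgcard]; exact Finset.card_le_card hSimg
  set m := n - d with hmdef
  have hNPcard : NP.card = m := by
    rw [hNPdef, Finset.card_sdiff_of_subset hSimg, himgcard, hScard]
  -- abs facts
  have habs_img : ∀ x ∈ Finset.univ.image w, ∀ y ∈ Finset.univ.image w, |x| = |y| → x = y := by
    intro x hx y hy hxy
    obtain ⟨a, _, ha⟩ := Finset.mem_image.1 hx
    obtain ⟨b, _, hb⟩ := Finset.mem_image.1 hy
    subst ha hb
    exact congrArg w (habs hxy)
  have habsS_sub : absS ⊆ Finset.Icc (1:ℤ) (n:ℤ) := by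
    intro x hx
    obtain ⟨s, hsS, rfl⟩ := Finset.mem_image.1 hx
    obtain ⟨a, rfl⟩ := hSsub s hsS
    exact Finset.mem_Icc.2 (hbnd a)
  have habsS_card : absS.card = d := by
    rw [habsSdef, Finset.card_image_of_injOn, hScard]
    intro x hx y hy hxy
    exact habs_img x (hSimg hx) y (hSimg hy) hxy
  have hAcard : A.card = m := by
    rw [hAdef, Finset.card_sdiff_of_subset habsS_sub, habsS_card, Int.card_Icc]
    omega
  have hNP_A : ∀ v ∈ NP, |v| ∈ A := by
    intro v hv
    rcases Finset.mem_sdiff.1 hv with ⟨hvimg, hvS⟩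
    obtain ⟨a, _, ha⟩ := Finset.mem_image.1 hvimg
    refine Finset.mem_sdiff.2 ⟨Finset.mem_Icc.2 (ha ▸ hbnd a), ?_⟩
    intro hcon
    obtain ⟨s, hsS, hs⟩ := Finset.mem_image.1 hcon
    exact hvS (habs_img v hvimg s (hSimg hsS) hs.symm ▸ hsS)
  have hp_NP : p ∈ NP :=
    Finset.mem_sdiff.2 ⟨Finset.mem_image.2 ⟨i0, Finset.mem_univ _, rfl⟩, hpS⟩
  have hpA : p ∈ A := hpabs ▸ hNP_A p hp_NP
  -- counting, in the form we need
  have hcount : ∀ s ∈ S, (S.filter (· < s)).card + 2 ≤ (NP.filter (· < s)).card :=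
    fun s hs => counting hwinj hmem hs
  -- the enumeration of S
  set se : ℕ → ℤ := fun j => if h : j < d then S.orderEmbOfFin hScard ⟨j, h⟩ else 0 with hsedef
  have hseS : ∀ j, j < d → se j ∈ S := by
    intro j hj
    rw [hsedef]; simp only [dif_pos hj]
    exact Finset.orderEmbOfFin_mem S hScard _
  have hsemono : ∀ j1 j2, j1 < j2 → j2 < d → se j1 < se j2 := by
    intro j1 j2 h12 h2
    rw [hsedef]; simp only [dif_pos h2, dif_pos (lt_trans h12 h2)]
    exact (S.orderEmbOfFin hScard).strictMono (Fin.mk_lt_mk.2 h12)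
  have hsesurj : ∀ x ∈ S, ∃ j, j < d ∧ se j = x := by
    intro x hx
    have : x ∈ Set.range (S.orderEmbOfFin hScard) := by
      rw [Finset.range_orderEmbOfFin]; exact hx
    obtain ⟨i, hi⟩ := this
    refine ⟨(i : ℕ), i.isLt, ?_⟩
    rw [hsedef]; simp only [dif_pos i.isLt]
    rw [Fin.eta]; exact hi
  have hfiltcard : ∀ j, j < d → (S.filter (· < se j)).card = j := by
    intro j hj
    have := card_filter_lt_orderEmb hScard hj
    rw [hsedef]; simp only [dif_pos hj]
    exact this
  -- m ≥ d + 1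
  have hmd : d + 1 ≤ m := by
    rcases Nat.eq_zero_or_pos d with hd0 | hd1
    · have : 0 < n := i0.isLt.trans_le' (Nat.zero_le _) |>.trans_le (le_refl n)
      omega
    · have hj : d - 1 < d := by omega
      have h1 := hcount (se (d-1)) (hseS _ hj)
      have h2 := hfiltcard (d-1) hj
      have h3 : (NP.filter (· < se (d-1))).card ≤ NP.card :=
        Finset.card_le_card (Finset.filter_subset _ _)
      omega
  set negS := (S.filter (· < 0)).card with hnegSdef
  -- choice of the non-pinnacle values
  have hU : ∃ U : Finset ℤ, U.card = m ∧ (∀ x ∈ U, x < 0 ∨ x = p) ∧ (∀ x ∈ U, |x| ∈ A) ∧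
      (∀ x ∈ U, ∀ y ∈ U, |x| = |y| → x = y) ∧ (∀ v ∈ NP, v < 0 → v ∈ U) ∧
      Even ((U.filter (· < 0)).card + negS) := by
    have hA1 : ∀ a ∈ A, 1 ≤ a := fun a ha =>
      (Finset.mem_Icc.1 (Finset.mem_sdiff.1 ha).1).1
    by_cases hpar : Even (m + negS)
    · refine ⟨A.image (fun a => -a), ?_, ?_, ?_, ?_, ?_, ?_⟩
      · rw [Finset.card_image_of_injective _ neg_injective, hAcard]
      · intro x hx
        obtain ⟨a, ha, rfl⟩ := Finset.mem_image.1 hx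
        exact Or.inl (by have := hA1 a ha; omega)
      · intro x hx
        obtain ⟨a, ha, rfl⟩ := Finset.mem_image.1 hx
        rwa [abs_neg, abs_of_nonneg (by have := hA1 a ha; omega)]
      · intro x hx y hy hxy
        obtain ⟨a, ha, rfl⟩ := Finset.mem_image.1 hx
        obtain ⟨b, hb, rfl⟩ := Finset.mem_image.1 hy
        rw [abs_neg, abs_neg, abs_of_nonneg (by have := hA1 a ha; omega),
          abs_of_nonneg (by have := hA1 b hb; omega)] at hxy
        rw [hxy]
      · intro v hv hvneg
        refine Finset.mem_image.2 ⟨|v|, hNP_A v hv, ?_⟩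
        rw [abs_of_neg hvneg, neg_neg]
      · have : (A.image (fun a => -a)).filter (· < 0) = A.image (fun a => -a) := by
          apply Finset.filter_true_of_mem
          intro x hx
          obtain ⟨a, ha, rfl⟩ := Finset.mem_image.1 hx
          have := hA1 a ha; omega
        rw [this, Finset.card_image_of_injective _ neg_injective, hAcard]
        exact hpar
    · have hpimg : p ∉ (A.erase p).image (fun a => -a) := by
        intro hcon
        obtain ⟨a, ha, ha2⟩ := Finset.mem_image.1 hcon
        have := hA1 a (Finset.erase_subset _ _ ha)
        omega
      have hicard : ((A.erase p).image (fun a => -a)).card = m - 1 := by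
        rw [Finset.card_image_of_injective _ neg_injective, Finset.card_erase_of_mem hpA, hAcard]
      refine ⟨insert p ((A.erase p).image (fun a => -a)), ?_, ?_, ?_, ?_, ?_, ?_⟩
      · rw [Finset.card_insert_of_notMem hpimg, hicard]; omega
      · intro x hx
        rcases Finset.mem_insert.1 hx with rfl | hx
        · exact Or.inr rfl
        · obtain ⟨a, ha, rfl⟩ := Finset.mem_image.1 hx
          exact Or.inl (by have := hA1 a (Finset.erase_subset _ _ ha); omega)
      · intro x hx
        rcases Finset.mem_insert.1 hx with rfl | hx
        · rw [hpabs]; exact hpA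
        · obtain ⟨a, ha, rfl⟩ := Finset.mem_image.1 hx
          have := hA1 a (Finset.erase_subset _ _ ha)
          rw [abs_neg, abs_of_nonneg (by omega)]
          exact Finset.erase_subset _ _ ha
      · intro x hx y hy hxy
        rcases Finset.mem_insert.1 hx with rfl | hx' <;> rcases Finset.mem_insert.1 hy with rfl | hy'
        · rfl
        · obtain ⟨a, ha, rfl⟩ := Finset.mem_image.1 hy'
          have h1 := hA1 a (Finset.erase_subset _ _ ha)
          rw [hpabs, abs_neg, abs_of_nonneg (by omega)] at hxy
          exact absurd (hxy ▸ ha) (by simpa using fun hc => (Finset.mem_erase.1 hc).1 rfl)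
        · obtain ⟨a, ha, rfl⟩ := Finset.mem_image.1 hx'
          have h1 := hA1 a (Finset.erase_subset _ _ ha)
          rw [hpabs, abs_neg, abs_of_nonneg (by omega)] at hxy
          exact absurd (hxy ▸ ha) (by simpa using fun hc => (Finset.mem_erase.1 hc).1 rfl)
        · obtain ⟨a, ha, rfl⟩ := Finset.mem_image.1 hx'
          obtain ⟨b, hb, rfl⟩ := Finset.mem_image.1 hy'
          have h1 := hA1 a (Finset.erase_subset _ _ ha)
          have h2 := hA1 b (Finset.erase_subset _ _ hb)
          rw [abs_neg, abs_neg, abs_of_nonneg (by omega), abs_of_nonneg (by omega)] at hxy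
          rw [hxy]
      · intro v hv hvneg
        refine Finset.mem_insert.2 (Or.inr (Finset.mem_image.2 ⟨|v|, ?_, ?_⟩))
        · refine Finset.mem_erase.2 ⟨?_, hNP_A v hv⟩
          intro hcon
          have : v = p := habs_img v (Finset.mem_sdiff.1 hv).1 p
            (Finset.mem_sdiff.1 hp_NP).1 (by rw [hcon, hpabs])
          omega
        · rw [abs_of_neg hvneg, neg_neg]
      · have : (insert p ((A.erase p).image (fun a => -a))).filter (· < 0)
            = (A.erase p).image (fun a => -a) := by
          ext x
          simp only [Finset.mem_filter, Finset.mem_insert]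
          constructor
          · rintro ⟨rfl | hx, hneg⟩
            · omega
            · exact hx
          · intro hx
            obtain ⟨a, ha, rfl⟩ := Finset.mem_image.1 hx
            have := hA1 a (Finset.erase_subset _ _ ha)
            exact ⟨Or.inr hx, by omega⟩
        rw [this, hicard]
        rw [Nat.even_iff] at hpar ⊢
        omega
  obtain ⟨U, hUcard, hUneg, hUabsA, hUabsinj, hUNP, hUpar⟩ := hU
  -- enumeration of U
  set ue : ℕ → ℤ := fun j => if h : j < m then U.orderEmbOfFin hUcard ⟨j, h⟩ else 0 with huedef
  have hueU : ∀ j, j < m → ue j ∈ U := by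
    intro j hj
    rw [huedef]; simp only [dif_pos hj]
    exact Finset.orderEmbOfFin_mem U hUcard _
  have huemono : ∀ j1 j2, j1 < j2 → j2 < m → ue j1 < ue j2 := by
    intro j1 j2 h12 h2
    rw [huedef]; simp only [dif_pos h2, dif_pos (lt_trans h12 h2)]
    exact (U.orderEmbOfFin hUcard).strictMono (Fin.mk_lt_mk.2 h12)
  have huesurj : ∀ x ∈ U, ∃ j, j < m ∧ ue j = x := by
    intro x hx
    have : x ∈ Set.range (U.orderEmbOfFin hUcard) := by
      rw [Finset.range_orderEmbOfFin]; exact hx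
    obtain ⟨i, hi⟩ := this
    refine ⟨(i : ℕ), i.isLt, ?_⟩
    rw [huedef]; simp only [dif_pos i.isLt]
    rw [Fin.eta]; exact hi
  -- nonzero pinnacle values
  have hsne : ∀ j, j < d → se j ≠ 0 := by
    intro j hj hcon
    obtain ⟨a, ha⟩ := hSsub (se j) (hseS j hj)
    have := (hbnd a).1
    rw [ha, hcon] at this
    simp at this
  -- THE KEY INEQUALITY
  have hkey : ∀ j, j < d → ue (j+1) < se j := by
    intro j hj
    have hjm : j + 1 < m := by omega
    have hsSj := hseS j hj
    by_cases hs : se j < 0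
    · -- use counting and the rank lemma
      have hsub : NP.filter (· < se j) ⊆ U.filter (· < se j) := by
        intro v hv
        rcases Finset.mem_filter.1 hv with ⟨hvNP, hvlt⟩
        exact Finset.mem_filter.2 ⟨hUNP v hvNP (by omega), hvlt⟩
      have hc1 := hcount (se j) hsSj
      have hc2 := hfiltcard j hj
      have hc3 := Finset.card_le_card hsub
      have hrank : j + 1 + 1 ≤ (U.filter (· < se j)).card := by omega
      have := rank_lt hUcard hjm hrank
      rw [huedef]; simp only [dif_pos hjm]
      exact this
    · -- se j > 0
      have hspos : 0 < se j := lt_of_le_of_ne (not_lt.1 hs) (Ne.symm (hsne j hj))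
      rcases hUneg (ue (j+1)) (hueU _ hjm) with hneg | hpe
      · omega
      · -- ue (j+1) = p : the extremal case
        have hm1 : j + 1 = m - 1 := by
          by_contra hne
          have hj2 : j + 1 < m - 1 := by omega
          have hlt2 : ue (j+1) < ue (m-1) := huemono _ _ hj2 (by omega)
          rcases hUneg (ue (m-1)) (hueU _ (by omega)) with hneg2 | hpe2
          · omega
          · rw [hpe, hpe2] at hlt2; omega
        -- so j = d - 1 and m = d + 1; all non-pinnacles of w are < se j
        have hjd : j = d - 1 ∧ m = d + 1 := by omega
        have hc1 := hcount (se j) hsSj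
        have hc2 := hfiltcard j hj
        have hfull : NP.filter (· < se j) = NP := by
          apply Finset.eq_of_subset_of_card_le (Finset.filter_subset _ _)
          omega
        have hpfull : p ∈ NP.filter (· < se j) := hfull.symm ▸ hp_NP
        have := (Finset.mem_filter.1 hpfull).2
        omega
  have hkey0 : ∀ j, j < d → ue j < se j := by
    intro j hj
    exact lt_trans (huemono j (j+1) (by omega) (by omega)) (hkey j hj)
  -- the zigzag word
  obtain ⟨zg, hzg⟩ : ∃ zg : ℕ → ℤ, ∀ q, zg q =
      if q % 2 = 1 ∧ q < 2*d then se (q/2) else if q < 2*d then ue (q/2) else ue (q - d) :=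
    ⟨_, fun q => rfl⟩
  obtain ⟨w', hw'⟩ : ∃ w' : Fin n → ℤ, ∀ q : Fin n, w' q = zg (q : ℕ) := ⟨_, fun q => rfl⟩
  have hn : n = d + m := by omega
  have hzs : ∀ j, j < d → zg (2*j+1) = se j := by
    intro j hj
    rw [hzg, if_pos ⟨by omega, by omega⟩]
    congr 1
    omega
  have hzu1 : ∀ j, j < d → zg (2*j) = ue j := by
    intro j hj
    rw [hzg, if_neg (by omega), if_pos (by omega)]
    congr 1
    omega
  have hzu2 : ∀ j, d ≤ j → zg (j + d) = ue j := by
    intro j hj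
    rw [hzg, if_neg (by omega), if_neg (by omega)]
    congr 1
    omega
  have hW' : ∀ q, (hq : q < n) → W w' q = zg q := by
    intro q hq
    rw [W_eq w' q hq, hw']
  have hvals : ∀ q : Fin n, (∃ j, j < d ∧ w' q = se j ∧ (q:ℕ) = 2*j+1) ∨
      (∃ j, j < m ∧ w' q = ue j ∧ ((q:ℕ) = 2*j ∧ j < d ∨ (q:ℕ) = j + d ∧ d ≤ j)) := by
    intro q
    rw [hw']
    by_cases h1 : (q:ℕ) % 2 = 1 ∧ (q:ℕ) < 2*d
    · refine Or.inl ⟨(q:ℕ)/2, by omega, ?_, by omega⟩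
      rw [hzg, if_pos h1]
    · rcases Nat.lt_or_ge (q:ℕ) (2*d) with h2 | h2
      · refine Or.inr ⟨(q:ℕ)/2, by omega, ?_, Or.inl ⟨by omega, by omega⟩⟩
        rw [hzg, if_neg h1, if_pos h2]
      · refine Or.inr ⟨(q:ℕ) - d, by have := q.isLt; omega, ?_, Or.inr ⟨by omega, by omega⟩⟩
        rw [hzg, if_neg h1, if_neg (by omega)]
  -- the pinnacle set of w' is S
  have hpin1 : ∀ x, x ∈ PinSet n w' → x ∈ S := by
    intro x hx
    obtain ⟨q, hq, hxq⟩ := (mem_pinset_iff w' x).1 hx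
    obtain ⟨h0, h1n, hl, hr⟩ := hq
    rw [hW' q (by omega)] at hxq
    rw [hW' (q+1) h1n, hW' q (by omega)] at hr
    by_cases hc : q % 2 = 1 ∧ q < 2*d
    · rw [hzg, if_pos hc] at hxq
      rw [← hxq]
      exact hseS (q/2) (by omega)
    · exfalso
      rcases Nat.lt_or_ge q (2*d) with h2 | h2
      · have hjd : q/2 < d := by omega
        have he1 : zg q = ue (q/2) := by rw [hzg, if_neg hc, if_pos h2]
        have he2 : zg (q+1) = se (q/2) := by
          have hh := hzs (q/2) hjd
          rw [← hh]
          congr 1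
          omega
        rw [he1, he2] at hr
        have := hkey0 (q/2) hjd
        omega
      · have he1 : zg q = ue (q - d) := by rw [hzg, if_neg hc, if_neg (by omega)]
        have he2 : zg (q+1) = ue (q + 1 - d) := by rw [hzg, if_neg (by omega), if_neg (by omega)]
        rw [he1, he2] at hr
        have hmono := huemono (q - d) (q + 1 - d) (by omega) (by omega)
        omega
  have hpin2 : ∀ x, x ∈ S → x ∈ PinSet n w' := by
    intro x hx
    obtain ⟨j, hj, hjx⟩ := hsesurj x hx
    apply (mem_pinset_iff w' x).2
    have h2jn : 2*j+1+1 < n := by omega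
    refine ⟨2*j+1, ⟨by omega, h2jn, ?_, ?_⟩, ?_⟩
    · rw [hW' (2*j+1-1) (by omega), hW' (2*j+1) (by omega)]
      have e1 : 2*j+1-1 = 2*j := by omega
      rw [e1, hzu1 j hj, hzs j hj]
      exact hkey0 j hj
    · rw [hW' (2*j+1+1) h2jn, hW' (2*j+1) (by omega)]
      have e1 : 2*j+1+1 = 2*(j+1) := by omega
      rw [e1, hzs j hj]
      have he : zg (2*(j+1)) = ue (j+1) := by
        rcases Nat.lt_or_ge (j+1) d with hlt | hge
        · exact hzu1 (j+1) hlt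
        · have hh := hzu2 (j+1) hge
          rw [← hh]
          congr 1
          omega
      rw [he]
      exact hkey j hj
    · rw [hW' (2*j+1) (by omega), hzs j hj]
      exact hjx
  have hPS' : PinSet n w' = ↑S := Set.ext fun x => ⟨hpin1 x, fun h => hpin2 x h⟩
  -- w' is a signed permutation
  have hse_abs_mem : ∀ j, j < d → |se j| ∈ absS :=
    fun j hj => Finset.mem_image.2 ⟨se j, hseS j hj, rfl⟩
  have hbnd' : ∀ q : Fin n, 1 ≤ |w' q| ∧ |w' q| ≤ (n:ℤ) := by
    intro q
    rcases hvals q with ⟨j, hj, he, _⟩ | ⟨j, hj, he, _⟩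
    · obtain ⟨a, ha⟩ := hSsub (se j) (hseS j hj)
      rw [he, ← ha]
      exact hbnd a
    · have h1 := hUabsA (ue j) (hueU j hj)
      have h2 := Finset.mem_Icc.1 (Finset.mem_sdiff.1 h1).1
      rw [he]
      exact h2
  have hinj' : Function.Injective (fun q : Fin n => |w' q|) := by
    intro q1 q2 heq
    simp only at heq
    rcases hvals q1 with ⟨j1, hj1, he1, hq1⟩ | ⟨j1, hj1, he1, hq1⟩ <;>
      rcases hvals q2 with ⟨j2, hj2, he2, hq2⟩ | ⟨j2, hj2, he2, hq2⟩
    · rw [he1, he2] at heq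
      have hv : se j1 = se j2 := by
        obtain ⟨a, ha⟩ := hSsub (se j1) (hseS j1 hj1)
        obtain ⟨b, hb⟩ := hSsub (se j2) (hseS j2 hj2)
        rw [← ha, ← hb] at heq ⊢
        exact congrArg w (habs heq)
      have hj12 : j1 = j2 := by
        rcases Nat.lt_trichotomy j1 j2 with h | h | h
        · have := hsemono j1 j2 h hj2; omega
        · exact h
        · have := hsemono j2 j1 h hj1; omega
      exact Fin.ext (by omega)
    · exfalso
      rw [he1, he2] at heq
      have h1 := hse_abs_mem j1 hj1
      have h2 := (Finset.mem_sdiff.1 (hUabsA (ue j2) (hueU j2 hj2))).2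
      rw [← heq] at h2
      exact h2 h1
    · exfalso
      rw [he1, he2] at heq
      have h1 := hse_abs_mem j2 hj2
      have h2 := (Finset.mem_sdiff.1 (hUabsA (ue j1) (hueU j1 hj1))).2
      rw [heq] at h2
      exact h2 h1
    · rw [he1, he2] at heq
      have hv : ue j1 = ue j2 := hUabsinj _ (hueU j1 hj1) _ (hueU j2 hj2) heq
      have hj12 : j1 = j2 := by
        rcases Nat.lt_trichotomy j1 j2 with h | h | h
        · have := huemono j1 j2 h hj2; omega
        · exact h
        · have := huemono j2 j1 h hj1; omega
      subst hj12
      rcases hq1 with ⟨e1, hd1⟩ | ⟨e1, hd1⟩ <;> rcases hq2 with ⟨e2, hd2⟩ | ⟨e2, hd2⟩ <;>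
        exact Fin.ext (by omega)
  have hw'inj : Function.Injective w' := by
    intro a b hab
    exact hinj' (by simp only [hab])
  -- parity
  have himg' : Finset.univ.image w' = S ∪ U := by
    ext x
    constructor
    · intro hx
      obtain ⟨q, _, rfl⟩ := Finset.mem_image.1 hx
      rcases hvals q with ⟨j, hj, he, _⟩ | ⟨j, hj, he, _⟩
      · refine Finset.mem_union_left _ ?_
        rw [he]; exact hseS j hj
      · refine Finset.mem_union_right _ ?_
        rw [he]; exact hueU j hj
    · intro hx
      rcases Finset.mem_union.1 hx with hx | hx
      · obtain ⟨j, hj, hjx⟩ := hsesurj x hx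
        refine Finset.mem_image.2 ⟨⟨2*j+1, by omega⟩, Finset.mem_univ _, ?_⟩
        rw [hw']
        show zg (2*j+1) = x
        rw [hzs j hj]
        exact hjx
      · obtain ⟨j, hj, hjx⟩ := huesurj x hx
        rcases Nat.lt_or_ge j d with hlt | hge
        · refine Finset.mem_image.2 ⟨⟨2*j, by omega⟩, Finset.mem_univ _, ?_⟩
          rw [hw']
          show zg (2*j) = x
          rw [hzu1 j hlt]
          exact hjx
        · refine Finset.mem_image.2 ⟨⟨j + d, by omega⟩, Finset.mem_univ _, ?_⟩
          rw [hw']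
          show zg (j + d) = x
          rw [hzu2 j hge]
          exact hjx
  have hcardneg : (Finset.univ.filter fun q => w' q < 0).card = ((S ∪ U).filter (· < 0)).card := by
    refine Finset.card_nbij (i := w') ?_ ?_ ?_
    · intro q hq
      rw [Finset.mem_coe, Finset.mem_filter, ← himg']
      exact ⟨Finset.mem_image.2 ⟨q, Finset.mem_univ _, rfl⟩, (Finset.mem_filter.1 hq).2⟩
    · intro a _ b _ hab
      exact hw'inj hab
    · intro x hx
      have hx' := Finset.mem_filter.1 (Finset.mem_coe.1 hx)
      rw [← himg'] at hx'
      obtain ⟨q, _, rfl⟩ := Finset.mem_image.1 hx'.1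
      exact ⟨q, Finset.mem_coe.2 (Finset.mem_filter.2 ⟨Finset.mem_univ _, hx'.2⟩), rfl⟩
  have hSUdisj : Disjoint S U := by
    rw [Finset.disjoint_left]
    intro x hxS hxU
    have h1 : |x| ∈ absS := Finset.mem_image.2 ⟨x, hxS, rfl⟩
    have h2 := (Finset.mem_sdiff.1 (hUabsA x hxU)).2
    exact h2 h1
  have hpar' : Even (Finset.univ.filter fun q => w' q < 0).card := by
    rw [hcardneg, Finset.filter_union, Finset.card_union_of_disjoint
      (Finset.disjoint_filter_filter hSUdisj)]
    have h1 : (S.filter (· < 0)).card = negS := rfl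
    rw [Nat.even_iff] at hUpar ⊢
    omega
  exact ⟨w', ⟨hbnd', hinj'⟩, hpar', hPS'⟩


end Stmt12Aux


theorem stmt12 (k : ℕ) (S : Finset ℤ) (h1 : APSB (2 * k + 1) S)
    (h2 : ¬ APSD (2 * k + 1) S) :
    ∀ w : Fin (2 * k + 1) → ℤ, IsSignedPerm (2 * k + 1) w →
      PinSet (2 * k + 1) w = ↑S → ∀ i, w i ∉ S → w i < 0 := by
  intro w hw hpin i hiS
  by_contra hcon
  push_neg at hcon
  have hp : 0 < w i := by
    have h1' := hw.1 i
    rcases abs_cases (w i) with ⟨ha, hb⟩ | ⟨ha, hb⟩ <;> omega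
  exact h2 (Stmt12Aux.main w S hw hpin i hp hiS)
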